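/- Let Γ : [0,∞) → (0,∞) be decreasing with Γ(r) ∼ r^b e^{−ηr} as r → ∞ (b ∈ ℝ, η > 0). Then there exist ρ₀ > 0 and C > 0 independent of K such that for all K, ℓ ∈ ℕ₊, all Q_1,…,Q_K ∈ ℝ^N with ρ ≥ ρ₀, and all x with |x − Q_{j₀}| = min_j |x − Q_j| ≤ ℓρ/2, one has Σ_{j=1}^K Γ(|x − Q_j|) ≤ C ℓ^{N−1} Γ(|x − Q_{j₀}|). -/

import Mathlib

open scoped Classical



open MeasureTheory Metric
open scoped ENNReal NNReal

section AuxLemmas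


lemma count_in_annulus {N K : ℕ} (hN : 0 < N) (Q : Fin K → EuclideanSpace ℝ (Fin N)) {ρ : ℝ}
    (hρ : 0 < ρ)
    (hsep : ∀ j l : Fin K, j ≠ l → ρ ≤ dist (Q j) (Q l))
    (x : EuclideanSpace ℝ (Fin N)) {a c : ℝ} (ha : 0 ≤ a - ρ/2) (hac : a ≤ c)
    (S : Finset (Fin K)) (hS : ∀ j ∈ S, a ≤ dist x (Q j) ∧ dist x (Q j) ≤ c) :
    (S.card : ℝ) * (ρ/2)^N ≤ (c + ρ/2)^N - (a - ρ/2)^N := by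
  haveI : Nontrivial (EuclideanSpace ℝ (Fin N)) :=
    Module.nontrivial_of_finrank_pos (by rw [finrank_euclideanSpace_fin]; exact hN)
  have hvol : ∀ (y : EuclideanSpace ℝ (Fin N)) (r : ℝ), 0 ≤ r →
      volume (ball y r) = ENNReal.ofReal (r ^ N) * volume (ball (0 : EuclideanSpace ℝ (Fin N)) 1) := by
    intro y r hr
    rw [Measure.addHaar_ball volume y hr, finrank_euclideanSpace_fin]
  set v := volume (ball (0 : EuclideanSpace ℝ (Fin N)) 1) with hv
  have hv0 : v ≠ 0 := (measure_ball_pos _ _ one_pos).ne'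
  have hvt : v ≠ ⊤ := measure_ball_lt_top.ne
  have hρ2 : (0:ℝ) < ρ/2 := by linarith
  have haρ : 0 ≤ a := by linarith
  have hcρ : 0 ≤ c + ρ/2 := by linarith
  have hdisj : (S : Set (Fin K)).PairwiseDisjoint (fun j => ball (Q j) (ρ/2)) := by
    intro j _ l _ hjl
    exact ball_disjoint_ball (by linarith [hsep j l hjl])
  have hsum : volume (⋃ j ∈ S, ball (Q j) (ρ/2)) = ∑ j ∈ S, volume (ball (Q j) (ρ/2)) :=
    measure_biUnion_finset hdisj (fun j _ => measurableSet_ball)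
  have hsub : (⋃ j ∈ S, ball (Q j) (ρ/2)) ⊆ ball x (c + ρ/2) \ ball x (a - ρ/2) := by
    intro z hz
    simp only [Set.mem_iUnion] at hz
    obtain ⟨j, hjS, hzj⟩ := hz
    have hj := hS j hjS
    rw [mem_ball] at hzj
    constructor
    · rw [mem_ball]
      calc dist z x ≤ dist z (Q j) + dist (Q j) x := dist_triangle _ _ _
        _ < ρ/2 + c := by rw [dist_comm (Q j) x]; linarith [hj.2]
        _ = c + ρ/2 := by ring
    · intro hmem
      rw [mem_ball] at hmem
      have h3 : dist x (Q j) ≤ dist x z + dist z (Q j) := dist_triangle _ _ _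
      rw [dist_comm x z] at h3
      linarith [hj.1]
  have hball_sub : ball x (a - ρ/2) ⊆ ball x (c + ρ/2) := ball_subset_ball (by linarith)
  have hdiff : volume (ball x (c + ρ/2) \ ball x (a - ρ/2))
      = volume (ball x (c + ρ/2)) - volume (ball x (a - ρ/2)) :=
    measure_diff hball_sub measurableSet_ball.nullMeasurableSet measure_ball_lt_top.ne
  have e1 : ((S.card : ℝ≥0∞)) * (ENNReal.ofReal ((ρ/2)^N) * v) = ∑ j ∈ S, volume (ball (Q j) (ρ/2)) := by
    rw [Finset.sum_congr rfl (fun j _ => hvol (Q j) (ρ/2) hρ2.le), Finset.sum_const, nsmul_eq_mul]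
  have key : ((S.card : ℝ≥0∞)) * (ENNReal.ofReal ((ρ/2)^N) * v)
      ≤ ENNReal.ofReal ((c + ρ/2)^N) * v - ENNReal.ofReal ((a - ρ/2)^N) * v := by
    rw [e1, ← hsum]
    calc volume (⋃ j ∈ S, ball (Q j) (ρ/2))
        ≤ volume (ball x (c + ρ/2) \ ball x (a - ρ/2)) := measure_mono hsub
      _ = volume (ball x (c + ρ/2)) - volume (ball x (a - ρ/2)) := hdiff
      _ = ENNReal.ofReal ((c + ρ/2)^N) * v - ENNReal.ofReal ((a - ρ/2)^N) * v := by
          rw [hvol x _ hcρ, hvol x _ ha]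
  rw [← mul_assoc, ← ENNReal.sub_mul (fun _ _ => hvt)] at key
  have key2 : ((S.card : ℝ≥0∞)) * ENNReal.ofReal ((ρ/2)^N)
      ≤ ENNReal.ofReal ((c + ρ/2)^N) - ENNReal.ofReal ((a - ρ/2)^N) :=
    (ENNReal.mul_le_mul_iff_left hv0 hvt).mp key
  have hpowle : (a - ρ/2)^N ≤ (c + ρ/2)^N := pow_le_pow_left₀ ha (by linarith) N
  rw [← ENNReal.ofReal_sub _ (pow_nonneg ha N), ← ENNReal.ofReal_natCast,
    ← ENNReal.ofReal_mul (by positivity)] at key2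
  exact (ENNReal.ofReal_le_ofReal_iff (by linarith)).mp key2



lemma ratio_bound (Γ : ℝ → ℝ) (b η c₁ c₂ r₀ : ℝ) (hη : 0 < η) (hc₁ : 0 < c₁) (hc₂ : 0 < c₂)
    (hbd : ∀ r : ℝ, r₀ ≤ r →
      c₁ * r ^ b * Real.exp (-η * r) ≤ Γ r ∧ Γ r ≤ c₂ * r ^ b * Real.exp (-η * r)) :
    ∃ C₃ : ℝ, 0 < C₃ ∧ ∀ s t : ℝ, max r₀ 1 ≤ s → s ≤ t →
      Γ t ≤ C₃ * Γ s * Real.exp (-(η/2) * (t - s)) := by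
  set n := ⌈b⌉₊ with hn
  set C₄ : ℝ := 2^n * (1 + n.factorial * (2/η)^n) with hC₄
  have hC₄pos : 0 < C₄ := by positivity
  refine ⟨(c₂/c₁) * C₄, by positivity, ?_⟩
  intro s t hs hst
  have hs1 : (1:ℝ) ≤ s := le_trans (le_max_right _ _) hs
  have hsr : r₀ ≤ s := le_trans (le_max_left _ _) hs
  have hs0 : (0:ℝ) < s := by linarith
  have ht0 : (0:ℝ) < t := by linarith
  set u := t - s with hu
  have hu0 : 0 ≤ u := by simp [hu]; linarith
  -- Step A
  have hA : t ^ b ≤ s ^ b * (1+u)^n := by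
    have hr1 : 1 ≤ t / s := (one_le_div hs0).mpr hst
    have hru : t / s ≤ 1 + u := by
      rw [div_le_iff₀ hs0]
      nlinarith
    have hAs : (t/s) ^ b ≤ (1+u)^n := by
      rcases le_or_gt b 0 with hb | hb
      · exact le_trans (Real.rpow_le_one_of_one_le_of_nonpos hr1 hb)
          (one_le_pow₀ (by linarith))
      · calc (t/s) ^ b ≤ (1+u) ^ b :=
              Real.rpow_le_rpow (by linarith) hru hb.le
          _ ≤ (1+u) ^ (n:ℝ) :=
              Real.rpow_le_rpow_of_exponent_le (by linarith) (Nat.le_ceil b)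
          _ = (1+u)^n := Real.rpow_natCast _ n
    have := mul_le_mul_of_nonneg_left hAs (le_of_lt (Real.rpow_pos_of_pos hs0 b))
    calc t ^ b = (s * (t/s)) ^ b := by rw [mul_div_cancel₀ _ hs0.ne']
      _ = s ^ b * (t/s) ^ b := Real.mul_rpow hs0.le (by positivity)
      _ ≤ s ^ b * (1+u)^n := this
  -- Step B
  have hB : (1+u)^n ≤ 2^n * (1 + u^n) := by
    have h1 : 1 + u ≤ 2 * max 1 u := by
      have := le_max_left 1 u; have := le_max_right 1 u; linarith
    calc (1+u)^n ≤ (2 * max 1 u)^n := pow_le_pow_left₀ (by linarith) h1 n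
      _ = 2^n * (max 1 u)^n := mul_pow _ _ _
      _ ≤ 2^n * (1 + u^n) := by
          apply mul_le_mul_of_nonneg_left _ (by positivity)
          rcases max_cases 1 u with ⟨h, _⟩ | ⟨h, _⟩
          · rw [h]; simp; positivity
          · rw [h]; nlinarith [pow_nonneg hu0 n]
  -- Step C
  have hC : u^n ≤ n.factorial * (2/η)^n * Real.exp (η/2 * u) := by
    have hx : (0:ℝ) ≤ η/2 * u := by positivity
    have hterm : (η/2*u)^n / n.factorial ≤ Real.exp (η/2*u) := by
      refine le_trans ?_ (Real.sum_le_exp_of_nonneg hx (n+1))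
      exact Finset.single_le_sum (f := fun i => (η/2*u)^i / (i.factorial : ℝ))
        (fun i _ => by positivity) (Finset.self_mem_range_succ n)
    have hfact : (0:ℝ) < n.factorial := by positivity
    have h2 : (η/2*u)^n ≤ n.factorial * Real.exp (η/2*u) := by
      rw [div_le_iff₀ hfact] at hterm; linarith [hterm]
    have hrw : u^n = (2/η)^n * (η/2*u)^n := by
      rw [← mul_pow]; congr 1; field_simp
    rw [hrw]
    calc (2/η)^n * (η/2*u)^n ≤ (2/η)^n * (n.factorial * Real.exp (η/2*u)) :=
          mul_le_mul_of_nonneg_left h2 (by positivity)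
      _ = n.factorial * (2/η)^n * Real.exp (η/2*u) := by ring
  -- combine
  have hsb : (0:ℝ) < s ^ b := Real.rpow_pos_of_pos hs0 b
  have hexp1 : (1:ℝ) ≤ Real.exp (η/2*u) := Real.one_le_exp (by positivity)
  have key : t ^ b * Real.exp (-η*t) ≤ C₄ * (s ^ b * Real.exp (-η*s) * Real.exp (-(η/2)*(t-s))) := by
    have e0 : (0:ℝ) < Real.exp (-η*t) := Real.exp_pos _
    have step1 : t ^ b * Real.exp (-η*t) ≤ s ^ b * (2^n * (1 + n.factorial * (2/η)^n * Real.exp (η/2*u))) * Real.exp (-η*t) := by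
      have : t ^ b ≤ s ^ b * (2^n * (1 + n.factorial * (2/η)^n * Real.exp (η/2*u))) := by
        calc t ^ b ≤ s ^ b * (1+u)^n := hA
          _ ≤ s ^ b * (2^n * (1 + u^n)) := mul_le_mul_of_nonneg_left hB hsb.le
          _ ≤ s ^ b * (2^n * (1 + n.factorial * (2/η)^n * Real.exp (η/2*u))) := by
              apply mul_le_mul_of_nonneg_left _ hsb.le
              apply mul_le_mul_of_nonneg_left _ (by positivity)
              linarith [hC]
      exact mul_le_mul_of_nonneg_right this e0.le
    have step2 : s ^ b * (2^n * (1 + n.factorial * (2/η)^n * Real.exp (η/2*u))) * Real.exp (-η*t)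
        ≤ s ^ b * (C₄ * Real.exp (η/2*u)) * Real.exp (-η*t) := by
      apply mul_le_mul_of_nonneg_right _ e0.le
      apply mul_le_mul_of_nonneg_left _ hsb.le
      rw [hC₄]
      nlinarith [(Nat.cast_pos (α := ℝ)).mpr (Nat.factorial_pos n), pow_pos (div_pos (by norm_num : (0:ℝ) < 2) hη) n,
        pow_pos (by norm_num : (0:ℝ) < 2) n, hexp1]
    have hee : Real.exp (η/2*u) * Real.exp (-η*t) = Real.exp (-η*s) * Real.exp (-(η/2)*(t-s)) := by
      rw [← Real.exp_add, ← Real.exp_add]; congr 1; rw [hu]; ring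
    have step3 : s ^ b * (C₄ * Real.exp (η/2*u)) * Real.exp (-η*t)
        = C₄ * (s ^ b * Real.exp (-η*s) * Real.exp (-(η/2)*(t-s))) := by
      calc s ^ b * (C₄ * Real.exp (η/2*u)) * Real.exp (-η*t)
          = C₄ * s ^ b * (Real.exp (η/2*u) * Real.exp (-η*t)) := by ring
        _ = C₄ * s ^ b * (Real.exp (-η*s) * Real.exp (-(η/2)*(t-s))) := by rw [hee]
        _ = C₄ * (s ^ b * Real.exp (-η*s) * Real.exp (-(η/2)*(t-s))) := by ring
    linarith [step1, step2, step3.le]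
  have hΓt := (hbd t (by linarith)).2
  have hΓs := (hbd s hsr).1
  have hexppos : (0:ℝ) < Real.exp (-(η/2)*(t-s)) := Real.exp_pos _
  calc Γ t ≤ c₂ * t ^ b * Real.exp (-η * t) := hΓt
    _ ≤ c₂ * (C₄ * (s ^ b * Real.exp (-η*s) * Real.exp (-(η/2)*(t-s)))) := by
        rw [mul_assoc]
        exact mul_le_mul_of_nonneg_left key hc₂.le
    _ = ((c₂/c₁) * C₄) * (c₁ * s ^ b * Real.exp (-η*s)) * Real.exp (-(η/2)*(t-s)) := by
        field_simp
    _ ≤ ((c₂/c₁) * C₄) * Γ s * Real.exp (-(η/2)*(t-s)) := by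
        apply mul_le_mul_of_nonneg_right _ hexppos.le
        exact mul_le_mul_of_nonneg_left hΓs (by positivity)



lemma pow_sub_pow_le_aux (n : ℕ) {a c : ℝ} (h0 : 0 ≤ c) (hca : c ≤ a) :
    a ^ n - c ^ n ≤ n * (a - c) * a ^ (n - 1) := by
  induction n with
  | zero => simp
  | succ k ih =>
    have ha : 0 ≤ a := le_trans h0 hca
    have h2 : a * (a^k - c^k) ≤ a * ((k : ℝ) * (a-c) * a^(k-1)) :=
      mul_le_mul_of_nonneg_left ih ha
    have h3 : a * ((k:ℝ) * (a-c) * a^(k-1)) ≤ (k:ℝ) * (a-c) * a^k := by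
      cases k with
      | zero => simp
      | succ i =>
        have hp : a * a ^ (i + 1 - 1) = a ^ (i+1) := by
          rw [Nat.add_sub_cancel, ← pow_succ']
        refine le_of_eq ?_
        calc a * ((↑(i+1):ℝ) * (a-c) * a^(i+1-1)) = (↑(i+1):ℝ)*(a-c)*(a * a^(i+1-1)) := by ring
          _ = (↑(i+1):ℝ)*(a-c)*a^(i+1) := by rw [hp]
    have h4 : (a-c)*c^k ≤ (a-c)*a^k :=
      mul_le_mul_of_nonneg_left (pow_le_pow_left₀ h0 hca k) (by linarith)
    have h1 : a^(k+1) - c^(k+1) = a * (a^k - c^k) + (a - c) * c^k := by ring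
    rw [h1, Nat.succ_sub_one]
    push_cast
    nlinarith [h2, h3, h4]

lemma summable_aux (p : ℕ) {q : ℝ} (hq0 : 0 < q) (hq1 : q < 1) :
    Summable (fun m : ℕ => ((m:ℝ)+3)^p * q^m) := by
  have h1 : Summable (fun n : ℕ => (n:ℝ)^p * q^n) :=
    summable_pow_mul_geometric_of_norm_lt_one p
      (by rw [Real.norm_eq_abs, abs_of_pos hq0]; exact hq1)
  have h2 : Summable (fun m : ℕ => ((m+3:ℕ):ℝ)^p * q^(m+3)) := (summable_nat_add_iff 3).mpr h1
  have h3 := h2.mul_right ((q^3)⁻¹)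
  apply h3.congr
  intro m
  push_cast
  have : q^(m+3) = q^m * q^3 := by ring
  rw [this]
  field_simp

end AuxLemmas

set_option maxHeartbeats 1000000 in
theorem stmt_3 (N : ℕ) (Γ : ℝ → ℝ) (b η : ℝ) (hη : 0 < η)
    (hpos : ∀ r : ℝ, 0 ≤ r → 0 < Γ r)
    (hdec : ∀ r s : ℝ, 0 ≤ r → r ≤ s → Γ s ≤ Γ r)
    (hasymp : ∃ c₁ c₂ r₀ : ℝ, 0 < c₁ ∧ 0 < c₂ ∧
      ∀ r : ℝ, r₀ ≤ r →
        c₁ * r ^ b * Real.exp (-η * r) ≤ Γ r ∧ Γ r ≤ c₂ * r ^ b * Real.exp (-η * r)) :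
    ∃ ρ₀ C : ℝ, 0 < ρ₀ ∧ 0 < C ∧
      ∀ (K ℓ : ℕ), 0 < K → 0 < ℓ →
        ∀ (Q : Fin K → EuclideanSpace ℝ (Fin N)) (ρ : ℝ), ρ₀ ≤ ρ →
          (∀ j l : Fin K, j ≠ l → ρ ≤ dist (Q j) (Q l)) →
          ∀ (j₀ : Fin K) (x : EuclideanSpace ℝ (Fin N)),
            (∀ j : Fin K, dist x (Q j₀) ≤ dist x (Q j)) →
            dist x (Q j₀) ≤ (ℓ : ℝ) * ρ / 2 →
            ∑ j : Fin K, Γ (dist x (Q j)) ≤ C * (ℓ : ℝ) ^ (N - 1) * Γ (dist x (Q j₀)) := by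
  obtain ⟨c₁, c₂, r₀, hc₁, hc₂, hbd⟩ := hasymp
  obtain ⟨C₃, hC₃, hrat⟩ := ratio_bound Γ b η c₁ c₂ r₀ hη hc₁ hc₂ hbd
  set R : ℝ := max r₀ 1 with hR
  have hR1 : (1:ℝ) ≤ R := le_max_right _ _
  set ρ₀ : ℝ := 2 * R with hρ₀def
  have hρ₀pos : 0 < ρ₀ := by positivity
  set q : ℝ := Real.exp (-(η * ρ₀ / 4)) with hqdef
  have hq0 : 0 < q := Real.exp_pos _
  have hq1 : q < 1 := Real.exp_lt_one_iff.mpr (by nlinarith)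
  set p : ℕ := N - 1 with hp
  have hsumg : Summable (fun m : ℕ => ((m:ℝ)+3)^p * q^m) := summable_aux p hq0 hq1
  set T : ℝ := ∑' m : ℕ, ((m:ℝ)+3)^p * q^m with hT
  have hT0 : 0 ≤ T := tsum_nonneg (fun m => by positivity)
  set C : ℝ := 1 + 3*N*C₃*T with hC
  have hCpos : 0 < C := by positivity
  have hC1 : 1 ≤ C := le_add_of_nonneg_right (by positivity)
  refine ⟨ρ₀, C, hρ₀pos, hCpos, ?_⟩
  intro K ℓ hK hℓ Q ρ hρρ₀ hsep j₀ x hmin hx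
  have hd₀ : (0:ℝ) ≤ dist x (Q j₀) := dist_nonneg
  have hΓd₀ : 0 < Γ (dist x (Q j₀)) := hpos _ hd₀
  have hℓ1 : (1:ℝ) ≤ (ℓ:ℝ) := by exact_mod_cast hℓ
  have hℓpow : 1 ≤ (ℓ:ℝ)^p := one_le_pow₀ hℓ1
  by_cases hK1 : K = 1
  · subst hK1
    have hj0 : j₀ = 0 := Subsingleton.elim _ _
    rw [Fin.sum_univ_one, hj0]
    have hone : (1:ℝ)*1 ≤ C * (ℓ:ℝ)^p := mul_le_mul hC1 hℓpow zero_le_one hCpos.le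
    nlinarith [hpos (dist x (Q 0)) dist_nonneg, hone]
  -- now K ≥ 2 and N ≥ 1
  have hK2 : 2 ≤ K := by omega
  have hρpos : 0 < ρ := lt_of_lt_of_le hρ₀pos hρρ₀
  have hρ2 : (0:ℝ) < ρ/2 := by linarith
  have hN : 0 < N := by
    rcases Nat.eq_zero_or_pos N with h0 | h
    · exfalso
      subst h0
      have hne : (⟨0, by omega⟩ : Fin K) ≠ ⟨1, by omega⟩ := by
        simp [Fin.ext_iff]
      have hd := hsep ⟨0, by omega⟩ ⟨1, by omega⟩ hne
      have heq : Q ⟨0, by omega⟩ = Q ⟨1, by omega⟩ := PiLp.ext fun i => i.elim0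
      rw [heq, dist_self] at hd
      linarith
    · exact h
  have hR2 : R ≤ ρ/2 := by rw [hρ₀def] at hρρ₀; linarith
  set s : ℝ := max (dist x (Q j₀)) (ρ/2) with hs
  have hsρ2 : ρ/2 ≤ s := le_max_right _ _
  have hd₀s : dist x (Q j₀) ≤ s := le_max_left _ _
  have hRs : R ≤ s := le_trans hR2 hsρ2
  have hs1 : (1:ℝ) ≤ s := le_trans hR1 hRs
  have hΓs : Γ s ≤ Γ (dist x (Q j₀)) := hdec _ _ hd₀ hd₀s
  have hΓspos : 0 < Γ s := hpos s (by linarith)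
  have hsℓ : s ≤ (ℓ:ℝ) * (ρ/2) := by
    apply max_le
    · calc dist x (Q j₀) ≤ (ℓ:ℝ) * ρ / 2 := hx
        _ = (ℓ:ℝ) * (ρ/2) := by ring
    · nlinarith
  have hdj : ∀ j : Fin K, j ≠ j₀ → s ≤ dist x (Q j) := by
    intro j hj
    apply max_le (hmin j)
    have h1 := hsep j₀ j (Ne.symm hj)
    have h2 : dist (Q j₀) (Q j) ≤ dist (Q j₀) x + dist x (Q j) := dist_triangle _ _ _
    rw [dist_comm (Q j₀) x] at h2
    have h3 := hmin j
    linarith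
  -- fibers
  set mf : Fin K → ℕ := fun j => ⌊(dist x (Q j) - s)/(ρ/2)⌋₊ with hmf
  set S : Finset (Fin K) := Finset.univ.erase j₀ with hS
  have hfiber : ∀ m : ℕ, ∀ j ∈ S.filter (fun j => mf j = m),
      s + m*(ρ/2) ≤ dist x (Q j) ∧ dist x (Q j) ≤ s + ((m:ℝ)+1)*(ρ/2) := by
    intro m j hj
    rw [Finset.mem_filter] at hj
    obtain ⟨hjS, hjm⟩ := hj
    have hjne : j ≠ j₀ := (Finset.mem_erase.mp hjS).1
    have hsj : s ≤ dist x (Q j) := hdj j hjne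
    have hy0 : (0:ℝ) ≤ (dist x (Q j) - s)/(ρ/2) := div_nonneg (by linarith) hρ2.le
    have := (Nat.floor_eq_iff hy0).mp hjm
    obtain ⟨hlo, hhi⟩ := this
    constructor
    · rw [le_div_iff₀ hρ2] at hlo; linarith
    · rw [div_lt_iff₀ hρ2] at hhi; linarith
  -- counting per fiber
  have hcount : ∀ m : ℕ, ((S.filter (fun j => mf j = m)).card : ℝ)
      ≤ 3*N*(ℓ:ℝ)^p * ((m:ℝ)+3)^p := by
    intro m
    have hkey := count_in_annulus hN Q hρpos hsep x
      (a := s + m*(ρ/2)) (c := s + ((m:ℝ)+1)*(ρ/2))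
      (by nlinarith) (by nlinarith) (S.filter (fun j => mf j = m)) (hfiber m)
    -- hkey : card * (ρ/2)^N ≤ (s+(m+1)(ρ/2)+ρ/2)^N - (s+m(ρ/2)-ρ/2)^N
    have hA : s + ((m:ℝ)+1)*(ρ/2) + ρ/2 = s + ((m:ℝ)+2)*(ρ/2) := by ring
    have hB : s + (m:ℝ)*(ρ/2) - ρ/2 = s + ((m:ℝ)-1)*(ρ/2) := by ring
    rw [hA, hB] at hkey
    have hsub : (s + ((m:ℝ)+2)*(ρ/2))^N - (s + ((m:ℝ)-1)*(ρ/2))^N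
        ≤ (N:ℝ) * (3*(ρ/2)) * (s + ((m:ℝ)+2)*(ρ/2))^(N-1) := by
      have := pow_sub_pow_le_aux N (a := s + ((m:ℝ)+2)*(ρ/2)) (c := s + ((m:ℝ)-1)*(ρ/2))
        (by nlinarith) (by nlinarith)
      have harith : s + ((m:ℝ)+2)*(ρ/2) - (s + ((m:ℝ)-1)*(ρ/2)) = 3*(ρ/2) := by ring
      rw [harith] at this
      exact this
    have hbase : s + ((m:ℝ)+2)*(ρ/2) ≤ (ℓ:ℝ) * ((m:ℝ)+3) * (ρ/2) := by nlinarith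
    have hbasepow : (s + ((m:ℝ)+2)*(ρ/2))^(N-1) ≤ ((ℓ:ℝ) * ((m:ℝ)+3) * (ρ/2))^(N-1) :=
      pow_le_pow_left₀ (by nlinarith) hbase (N-1)
    have hfinal : ((S.filter (fun j => mf j = m)).card : ℝ) * (ρ/2)^N
        ≤ 3*N*(ℓ:ℝ)^p * ((m:ℝ)+3)^p * (ρ/2)^N := by
      calc ((S.filter (fun j => mf j = m)).card : ℝ) * (ρ/2)^N
          ≤ (s + ((m:ℝ)+2)*(ρ/2))^N - (s + ((m:ℝ)-1)*(ρ/2))^N := hkey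
        _ ≤ (N:ℝ) * (3*(ρ/2)) * (s + ((m:ℝ)+2)*(ρ/2))^(N-1) := hsub
        _ ≤ (N:ℝ) * (3*(ρ/2)) * ((ℓ:ℝ) * ((m:ℝ)+3) * (ρ/2))^(N-1) := by
            apply mul_le_mul_of_nonneg_left hbasepow (by positivity)
        _ = 3*N*(ℓ:ℝ)^p * ((m:ℝ)+3)^p * ((ρ/2) * (ρ/2)^(N-1)) := by
            rw [mul_pow, mul_pow, hp]; ring
        _ = 3*N*(ℓ:ℝ)^p * ((m:ℝ)+3)^p * (ρ/2)^N := by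
            rw [← pow_succ']
            congr 2
            omega
    exact le_of_mul_le_mul_right (by calc ((S.filter (fun j => mf j = m)).card : ℝ) * (ρ/2)^N ≤ _ := hfinal) (pow_pos hρ2 N)
  -- value per fiber
  have hval : ∀ m : ℕ, ∀ j ∈ S.filter (fun j => mf j = m),
      Γ (dist x (Q j)) ≤ C₃ * Γ (dist x (Q j₀)) * q^m := by
    intro m j hj
    have hf := hfiber m j hj
    have hjS := (Finset.mem_filter.mp hj).1
    have hjne : j ≠ j₀ := (Finset.mem_erase.mp hjS).1
    have hsj : s ≤ dist x (Q j) := hdj j hjne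
    have h1 : Γ (dist x (Q j)) ≤ C₃ * Γ s * Real.exp (-(η/2) * (dist x (Q j) - s)) :=
      hrat s (dist x (Q j)) hRs hsj
    have h2 : Real.exp (-(η/2) * (dist x (Q j) - s)) ≤ q^m := by
      calc Real.exp (-(η/2) * (dist x (Q j) - s))
          ≤ Real.exp ((m:ℝ) * (-(η * ρ / 4))) := by
            apply Real.exp_le_exp.mpr
            have := hf.1
            nlinarith
        _ = Real.exp (-(η * ρ / 4)) ^ m := Real.exp_nat_mul _ m
        _ ≤ q^m := by
            apply pow_le_pow_left₀ (Real.exp_pos _).le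
            apply Real.exp_le_exp.mpr
            nlinarith
    calc Γ (dist x (Q j)) ≤ C₃ * Γ s * Real.exp (-(η/2) * (dist x (Q j) - s)) := h1
      _ ≤ C₃ * Γ s * q^m := mul_le_mul_of_nonneg_left h2 (by positivity)
      _ ≤ C₃ * Γ (dist x (Q j₀)) * q^m := by
          apply mul_le_mul_of_nonneg_right _ (by positivity)
          exact mul_le_mul_of_nonneg_left hΓs hC₃.le
  -- fiber sums
  have hfibsum : ∀ m : ℕ, ∑ j ∈ S.filter (fun j => mf j = m), Γ (dist x (Q j))
      ≤ (3*N*C₃*Γ (dist x (Q j₀))*(ℓ:ℝ)^p) * (((m:ℝ)+3)^p * q^m) := by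
    intro m
    calc ∑ j ∈ S.filter (fun j => mf j = m), Γ (dist x (Q j))
        ≤ (S.filter (fun j => mf j = m)).card • (C₃ * Γ (dist x (Q j₀)) * q^m) :=
          Finset.sum_le_card_nsmul _ _ _ (hval m)
      _ = ((S.filter (fun j => mf j = m)).card : ℝ) * (C₃ * Γ (dist x (Q j₀)) * q^m) := by
          rw [nsmul_eq_mul]
      _ ≤ (3*N*(ℓ:ℝ)^p * ((m:ℝ)+3)^p) * (C₃ * Γ (dist x (Q j₀)) * q^m) := by
          apply mul_le_mul_of_nonneg_right (hcount m) (by positivity)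
      _ = (3*N*C₃*Γ (dist x (Q j₀))*(ℓ:ℝ)^p) * (((m:ℝ)+3)^p * q^m) := by ring
  -- total
  have hmaps : ∀ j ∈ S, mf j ∈ S.image mf := fun j hj => Finset.mem_image_of_mem mf hj
  have hsplit : ∑ j ∈ S, Γ (dist x (Q j))
      = ∑ m ∈ S.image mf, ∑ j ∈ S.filter (fun j => mf j = m), Γ (dist x (Q j)) :=
    (Finset.sum_fiberwise_of_maps_to hmaps _).symm
  have hGsummable : Summable (fun m : ℕ =>
      (3*N*C₃*Γ (dist x (Q j₀))*(ℓ:ℝ)^p) * (((m:ℝ)+3)^p * q^m)) := hsumg.mul_left _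
  have htotS : ∑ j ∈ S, Γ (dist x (Q j))
      ≤ (3*N*C₃*Γ (dist x (Q j₀))*(ℓ:ℝ)^p) * T := by
    rw [hsplit]
    calc ∑ m ∈ S.image mf, ∑ j ∈ S.filter (fun j => mf j = m), Γ (dist x (Q j))
        ≤ ∑ m ∈ S.image mf, (3*N*C₃*Γ (dist x (Q j₀))*(ℓ:ℝ)^p) * (((m:ℝ)+3)^p * q^m) :=
          Finset.sum_le_sum (fun m _ => hfibsum m)
      _ ≤ ∑' m : ℕ, (3*N*C₃*Γ (dist x (Q j₀))*(ℓ:ℝ)^p) * (((m:ℝ)+3)^p * q^m) :=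
          Summable.sum_le_tsum _ (fun m _ => by positivity) hGsummable
      _ = (3*N*C₃*Γ (dist x (Q j₀))*(ℓ:ℝ)^p) * T := by
          rw [hT]; exact tsum_mul_left
  have hdecomp : ∑ j ∈ S, Γ (dist x (Q j)) + Γ (dist x (Q j₀)) = ∑ j : Fin K, Γ (dist x (Q j)) :=
    Finset.sum_erase_add _ _ (Finset.mem_univ j₀)
  rw [← hdecomp]
  have : C * (ℓ:ℝ)^(N-1) * Γ (dist x (Q j₀))
      = (ℓ:ℝ)^p * Γ (dist x (Q j₀)) + (3*N*C₃*T) * ((ℓ:ℝ)^p * Γ (dist x (Q j₀))) := by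
    rw [hC, hp]; ring
  rw [this]
  have h1 : Γ (dist x (Q j₀)) ≤ (ℓ:ℝ)^p * Γ (dist x (Q j₀)) := by nlinarith
  have h2 : (3*N*C₃*Γ (dist x (Q j₀))*(ℓ:ℝ)^p) * T = (3*N*C₃*T) * ((ℓ:ℝ)^p * Γ (dist x (Q j₀))) := by
    ring
  linarith [htotS, h1, h2.le]
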